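/- Let G be a group, A = ⊕_{g∈G} A_g a G-graded unital *-algebra over ℂ whose unit fibre A_e is commutative, and χ a positive character of A_e. Fix g ∈ G and b ∈ A_g with χ(b* b) ≠ 0. Then the map ϑ : A_e → ℂ defined by ϑ(x) := χ(b* x b)/χ(b* b) is again a positive character of A_e: it is ℂ-linear, unital, multiplicative, satisfies ϑ(x*) = conj(ϑ(x)), and ϑ(c* c) is real and nonnegative for every h ∈ G and c ∈ A_h. Moreover ϑ does not depend on the choice of b: if b' ∈ A_g also satisfies χ(b'* b') ≠ 0, then χ(b* x b)/χ(b* b) = χ(b'* x b')/χ(b'* b') for all x ∈ A_e. -/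

import Mathlib

/-- A `G`-graded unital `⋆`-algebra over `ℂ`: a direct sum decomposition
`A = ⊕_{g ∈ G} A_g` into subspaces with `A_g · A_h ⊆ A_{gh}`, `(A_g)* = A_{g⁻¹}` and
`1 ∈ A_e`. -/
structure GradedStarAlgebra (G : Type*) [Group G]
    (A : Type*) [Ring A] [Algebra ℂ A] [StarRing A] [StarModule ℂ A] where
  fiber : G → Submodule ℂ A
  mul_mem' : ∀ {g h : G} {a b : A}, a ∈ fiber g → b ∈ fiber h → a * b ∈ fiber (g * h)
  star_mem' : ∀ {g : G} {a : A}, a ∈ fiber g → star a ∈ fiber g⁻¹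
  one_mem' : (1 : A) ∈ fiber 1
  decompose' : ∀ a : A, ∃ (F : Finset G) (c : G → A),
    (∀ g : G, c g ∈ fiber g) ∧ a = ∑ g ∈ F, c g
  independent' : ∀ (F : Finset G) (c : G → A), (∀ g : G, c g ∈ fiber g) →
    ∑ g ∈ F, c g = 0 → ∀ g ∈ F, c g = 0

variable {G : Type*} [Group G]
variable {A : Type*} [Ring A] [Algebra ℂ A] [StarRing A] [StarModule ℂ A]

/-- A positive character of the unit fibre `A_e` of a `G`-graded unital `⋆`-algebra: a unital,
multiplicative, `ℂ`-linear, `⋆`-preserving functional on `A_e` such that `χ (a* a) ≥ 0` for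
every `a ∈ A_g` and every `g ∈ G`. -/
structure PosChar (S : GradedStarAlgebra G A) where
  toFun : A → ℂ
  map_one' : toFun 1 = 1
  map_mul' : ∀ x ∈ S.fiber 1, ∀ y ∈ S.fiber 1, toFun (x * y) = toFun x * toFun y
  map_add' : ∀ x ∈ S.fiber 1, ∀ y ∈ S.fiber 1, toFun (x + y) = toFun x + toFun y
  map_smul' : ∀ (c : ℂ), ∀ x ∈ S.fiber 1, toFun (c • x) = c * toFun x
  map_star' : ∀ x ∈ S.fiber 1, toFun (star x) = starRingEnd ℂ (toFun x)
  pos' : ∀ (g : G), ∀ a ∈ S.fiber g,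
    0 ≤ (toFun (star a * a)).re ∧ (toFun (star a * a)).im = 0

namespace PCAux

variable {S : GradedStarAlgebra G A}

lemma mem_pair {g : G} {u v : A} (hu : u ∈ S.fiber g) (hv : v ∈ S.fiber g) :
    star u * v ∈ S.fiber 1 := by
  simpa using S.mul_mem' (S.star_mem' hu) hv

lemma mem_pair' {g : G} {u v : A} (hu : u ∈ S.fiber g) (hv : v ∈ S.fiber g) :
    u * star v ∈ S.fiber 1 := by
  simpa using S.mul_mem' hu (S.star_mem' hv)

lemma mem_sandwich {g : G} {x u v : A} (hx : x ∈ S.fiber 1)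
    (hu : u ∈ S.fiber g) (hv : v ∈ S.fiber g) :
    star u * x * v ∈ S.fiber 1 := by
  have h1 : star u * x ∈ S.fiber g⁻¹ := by simpa using S.mul_mem' (S.star_mem' hu) hx
  simpa using S.mul_mem' h1 hv

lemma chi_conj (χ : PosChar S) {g : G} {u v : A} (hu : u ∈ S.fiber g) (hv : v ∈ S.fiber g) :
    χ.toFun (star v * u) = starRingEnd ℂ (χ.toFun (star u * v)) := by
  simpa [star_mul] using χ.map_star' _ (mem_pair hu hv)

/-- Key rearrangement: `χ(u* x u) χ(u* v) = χ(u* u) χ(u* x v)`. -/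
lemma keyK (hcomm : ∀ x ∈ S.fiber 1, ∀ y ∈ S.fiber 1, x * y = y * x)
    (χ : PosChar S) {g : G} {x u v : A} (hx : x ∈ S.fiber 1)
    (hu : u ∈ S.fiber g) (hv : v ∈ S.fiber g) :
    χ.toFun (star u * x * u) * χ.toFun (star u * v) =
      χ.toFun (star u * u) * χ.toFun (star u * x * v) := by
  have hc : x * (u * star u) = (u * star u) * x := hcomm x hx _ (mem_pair' hu hu)
  have hmv : x * (u * (star u * v)) = u * (star u * (x * v)) := by
    have := congrArg (· * v) hc
    simpa [mul_assoc] using this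
  have hprod : (star u * x * u) * (star u * v) = (star u * u) * (star u * x * v) := by
    simp only [mul_assoc]
    rw [hmv]
  rw [← χ.map_mul' _ (mem_sandwich hx hu hu) _ (mem_pair hu hv),
      ← χ.map_mul' _ (mem_pair hu hu) _ (mem_sandwich hx hu hv), hprod]

/-- `χ(u* x v) χ(v* u) = χ(u* v) χ(v* x u)`. -/
lemma keyE3 (hcomm : ∀ x ∈ S.fiber 1, ∀ y ∈ S.fiber 1, x * y = y * x)
    (χ : PosChar S) {g : G} {x u v : A} (hx : x ∈ S.fiber 1)
    (hu : u ∈ S.fiber g) (hv : v ∈ S.fiber g) :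
    χ.toFun (star u * x * v) * χ.toFun (star v * u) =
      χ.toFun (star u * v) * χ.toFun (star v * x * u) := by
  have hc : x * (v * star v) = (v * star v) * x := hcomm x hx _ (mem_pair' hv hv)
  have hmv : x * (v * (star v * u)) = v * (star v * (x * u)) := by
    have := congrArg (· * u) hc
    simpa [mul_assoc] using this
  have hprod : (star u * x * v) * (star v * u) = (star u * v) * (star v * x * u) := by
    simp only [mul_assoc]
    rw [hmv]
  rw [← χ.map_mul' _ (mem_sandwich hx hu hv) _ (mem_pair hv hu),
      ← χ.map_mul' _ (mem_pair hu hv) _ (mem_sandwich hx hv hu), hprod]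

/-- Multiplicativity identity: `χ(b*(xy)b) χ(b*b) = χ(b*xb) χ(b*yb)`. -/
lemma keyMul (hcomm : ∀ x ∈ S.fiber 1, ∀ y ∈ S.fiber 1, x * y = y * x)
    (χ : PosChar S) {g : G} {x y b : A} (hx : x ∈ S.fiber 1) (hy : y ∈ S.fiber 1)
    (hb : b ∈ S.fiber g) :
    χ.toFun (star b * (x * y) * b) * χ.toFun (star b * b) =
      χ.toFun (star b * x * b) * χ.toFun (star b * y * b) := by
  have hxy : x * y ∈ S.fiber 1 := by simpa using S.mul_mem' hx hy
  have hc : y * (b * star b) = (b * star b) * y := hcomm y hy _ (mem_pair' hb hb)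
  have hmv : y * (b * (star b * b)) = b * (star b * (y * b)) := by
    have := congrArg (· * b) hc
    simpa [mul_assoc] using this
  have hprod : (star b * (x * y) * b) * (star b * b) =
      (star b * x * b) * (star b * y * b) := by
    simp only [mul_assoc]
    rw [hmv]
  rw [← χ.map_mul' _ (mem_sandwich hxy hb hb) _ (mem_pair hb hb),
      ← χ.map_mul' _ (mem_sandwich hx hb hb) _ (mem_sandwich hy hb hb), hprod]

/-- Independence, case `χ(u* v) ≠ 0`. -/
lemma indep_of_ne (hcomm : ∀ x ∈ S.fiber 1, ∀ y ∈ S.fiber 1, x * y = y * x)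
    (χ : PosChar S) {g : G} {x u v : A} (hx : x ∈ S.fiber 1)
    (hu : u ∈ S.fiber g) (hv : v ∈ S.fiber g)
    (huv : χ.toFun (star u * v) ≠ 0) :
    χ.toFun (star u * x * u) * χ.toFun (star v * v) =
      χ.toFun (star v * x * v) * χ.toFun (star u * u) := by
  have hvu : χ.toFun (star v * u) ≠ 0 := by
    rw [chi_conj χ hu hv]
    simpa using huv
  have h1 := keyK hcomm χ hx hu hv
  have h2 := keyK hcomm χ hx hv hu
  have h3 := keyE3 hcomm χ hx hu hv
  apply mul_right_cancel₀ (mul_ne_zero huv hvu)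
  linear_combination (χ.toFun (star v * v) * χ.toFun (star v * u)) * h1 +
    χ.toFun (star u * u) * χ.toFun (star v * v) * h3 -
    (χ.toFun (star u * u) * χ.toFun (star u * v)) * h2

/-- Independence in general. -/
lemma indep (hcomm : ∀ x ∈ S.fiber 1, ∀ y ∈ S.fiber 1, x * y = y * x)
    (χ : PosChar S) {g : G} {x u v : A} (hx : x ∈ S.fiber 1)
    (hu : u ∈ S.fiber g) (hv : v ∈ S.fiber g)
    (hu0 : χ.toFun (star u * u) ≠ 0) (hv0 : χ.toFun (star v * v) ≠ 0) :
    χ.toFun (star u * x * u) * χ.toFun (star v * v) =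
      χ.toFun (star v * x * v) * χ.toFun (star u * u) := by
  by_cases huv : χ.toFun (star u * v) = 0
  · -- use w = u + v
    have hvu : χ.toFun (star v * u) = 0 := by
      rw [chi_conj χ hu hv, huv]; simp
    have hw : u + v ∈ S.fiber g := (S.fiber g).add_mem hu hv
    -- expansions
    have huw : χ.toFun (star u * (u + v)) = χ.toFun (star u * u) := by
      rw [mul_add, χ.map_add' _ (mem_pair hu hu) _ (mem_pair hu hv), huv, add_zero]
    have hvw : χ.toFun (star v * (u + v)) = χ.toFun (star v * v) := by
      rw [mul_add, χ.map_add' _ (mem_pair hv hu) _ (mem_pair hv hv), hvu, zero_add]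
    have hww : χ.toFun (star (u + v) * (u + v)) =
        χ.toFun (star u * u) + χ.toFun (star v * v) := by
      have : star (u + v) * (u + v) = (star u * (u + v)) + (star v * (u + v)) := by
        rw [star_add, add_mul]
      rw [this, χ.map_add' _ (mem_pair hu hw) _ (mem_pair hv hw), huw, hvw]
    have hww0 : χ.toFun (star (u + v) * (u + v)) ≠ 0 := by
      rw [hww]
      have pu := χ.pos' g u hu
      have pv := χ.pos' g v hv
      have hur : 0 < (χ.toFun (star u * u)).re := by
        rcases lt_or_eq_of_le pu.1 with h | h
        · exact h
        · exfalso; exact hu0 (Complex.ext (by simp [← h]) (by simp [pu.2]))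
      have hvr : 0 < (χ.toFun (star v * v)).re := by
        rcases lt_or_eq_of_le pv.1 with h | h
        · exact h
        · exfalso; exact hv0 (Complex.ext (by simp [← h]) (by simp [pv.2]))
      intro hz
      have := congrArg Complex.re hz
      simp only [Complex.add_re, Complex.zero_re] at this
      linarith
    have huw0 : χ.toFun (star u * (u + v)) ≠ 0 := by rw [huw]; exact hu0
    have hvw0 : χ.toFun (star v * (u + v)) ≠ 0 := by rw [hvw]; exact hv0
    have e1 := indep_of_ne hcomm χ hx hu hw huw0
    have e2 := indep_of_ne hcomm χ hx hv hw hvw0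
    -- e1 : χ(u*xu) χ(w*w) = χ(w*xw) χ(u*u); e2 similarly
    apply mul_left_cancel₀ hww0
    linear_combination χ.toFun (star v * v) * e1 - χ.toFun (star u * u) * e2
  · exact indep_of_ne hcomm χ hx hu hv huv

end PCAux

/-- Let `A` be a `G`-graded unital `⋆`-algebra with commutative unit fibre `A_e`, `χ` a positive
character of `A_e`, and `b ∈ A_g` with `χ (b* b) ≠ 0`.  Then `x ↦ χ(b* x b)/χ(b* b)` is again a
positive character of `A_e`, and it does not depend on the choice of `b`. -/
theorem posChar_conjugate_is_posChar (S : GradedStarAlgebra G A)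
    (hcomm : ∀ x ∈ S.fiber 1, ∀ y ∈ S.fiber 1, x * y = y * x)
    (χ : PosChar S) (g : G) (b : A) (hb : b ∈ S.fiber g)
    (hb0 : χ.toFun (star b * b) ≠ 0) :
    (∃ θ : PosChar S, ∀ x : A,
      θ.toFun x = χ.toFun (star b * x * b) / χ.toFun (star b * b)) ∧
    (∀ b' : A, b' ∈ S.fiber g → χ.toFun (star b' * b') ≠ 0 →
      ∀ x ∈ S.fiber 1,
        χ.toFun (star b * x * b) / χ.toFun (star b * b) =
          χ.toFun (star b' * x * b') / χ.toFun (star b' * b')) := by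
  have hd := χ.pos' g b hb
  have hdre : 0 < (χ.toFun (star b * b)).re := by
    rcases lt_or_eq_of_le hd.1 with h | h
    · exact h
    · exact absurd (Complex.ext (by simp [← h]) (by simp [hd.2])) hb0
  have hdreal : χ.toFun (star b * b) = ((χ.toFun (star b * b)).re : ℂ) :=
    (Complex.ext (by simp) (by simp [hd.2]))
  constructor
  · refine ⟨⟨fun x => χ.toFun (star b * x * b) / χ.toFun (star b * b), ?_, ?_, ?_, ?_, ?_, ?_⟩,
      fun x => rfl⟩
    · simp only [mul_one]
      exact div_self hb0
    · intro x hx y hy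
      have := PCAux.keyMul hcomm χ hx hy hb
      field_simp
      linear_combination this
    · intro x hx y hy
      have hexp : star b * (x + y) * b = star b * x * b + star b * y * b := by
        rw [mul_add, add_mul]
      rw [hexp, χ.map_add' _ (PCAux.mem_sandwich hx hb hb) _ (PCAux.mem_sandwich hy hb hb),
        add_div]
    · intro c x hx
      have hexp : star b * (c • x) * b = c • (star b * x * b) := by
        rw [mul_smul_comm, smul_mul_assoc]
      rw [hexp, χ.map_smul' c _ (PCAux.mem_sandwich hx hb hb), mul_div_assoc]
    · intro x hx
      have hstx : star x ∈ S.fiber 1 := by simpa using S.star_mem' hx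
      have hexp : star b * star x * b = star (star b * x * b) := by
        simp [star_mul, mul_assoc]
      rw [hexp, χ.map_star' _ (PCAux.mem_sandwich hx hb hb), map_div₀]
      congr 1
      rw [← χ.map_star' _ (PCAux.mem_pair hb hb)]
      congr 1
      simp [star_mul, mul_assoc]
    · intro h a ha
      have hexp : star b * (star a * a) * b = star (a * b) * (a * b) := by
        simp [star_mul, mul_assoc]
      have hab : a * b ∈ S.fiber (h * g) := S.mul_mem' ha hb
      have hN := χ.pos' (h * g) (a * b) hab
      rw [hexp]
      constructor
      · rw [hdreal, Complex.div_ofReal_re]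
        exact div_nonneg hN.1 (le_of_lt hdre)
      · rw [hdreal, Complex.div_ofReal_im, hN.2, zero_div]
  · intro b' hb' hb'0 x hx
    have := PCAux.indep hcomm χ hx hb hb' hb0 hb'0
    rw [div_eq_div_iff hb0 hb'0]
    linear_combination this
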